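/- If σ₁σ₂⋯σ_k = σ is a reduced factorization in a Coxeter group (reflection lengths add) and 1 ≤ i₁ < ⋯ < i_j ≤ k is any selection of positions, then there exists a reduced factorization of σ into k factors whose first j factors (in order) are σ_{i₁}, σ_{i₂}, …, σ_{i_j}, and another whose last j factors are these. -/

import Mathlib

/-- The reflection length of an element of a Coxeter group: the minimal length of a
factorization into reflections. -/
noncomputable def coxReflLen {B W : Type*} [Group W] {M : CoxeterMatrix B}
    (cs : CoxeterSystem M W) (w : W) : ℕ :=
  sInf {k | ∃ l : List W, l.prod = w ∧ l.length = k ∧ ∀ t ∈ l, cs.IsReflection t}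

section Aux

variable {B W : Type*} [Group W] {M : CoxeterMatrix B}

private lemma conj_prod (a : W) (m : List W) :
    (m.map (fun x => a * x * a⁻¹)).prod = a * m.prod * a⁻¹ := by
  induction m with
  | nil => simp
  | cons x m ih => simp only [List.map_cons, List.prod_cons, ih]; group

private lemma coxReflLen_set_subset (cs : CoxeterSystem M W) (a w : W) :
    {k | ∃ l : List W, l.prod = w ∧ l.length = k ∧ ∀ t ∈ l, cs.IsReflection t} ⊆
    {k | ∃ l : List W, l.prod = a * w * a⁻¹ ∧ l.length = k ∧ ∀ t ∈ l, cs.IsReflection t} := by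
  rintro k ⟨m, hp, hl, hr⟩
  refine ⟨m.map (fun x => a * x * a⁻¹), by rw [conj_prod, hp], by simp [hl], ?_⟩
  intro t ht
  simp only [List.mem_map] at ht
  obtain ⟨x, hx, rfl⟩ := ht
  exact (hr x hx).conj a

private lemma coxReflLen_conj (cs : CoxeterSystem M W) (a w : W) :
    coxReflLen cs (a * w * a⁻¹) = coxReflLen cs w := by
  have h1 := coxReflLen_set_subset cs a w
  have h2 := coxReflLen_set_subset cs a⁻¹ (a * w * a⁻¹)
  rw [show a⁻¹ * (a * w * a⁻¹) * a⁻¹⁻¹ = w by group] at h2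
  unfold coxReflLen
  exact congrArg sInf (h1.antisymm h2).symm

private lemma pull_front (f : W → ℕ) (hf : ∀ a w : W, f (a * w * a⁻¹) = f w)
    {s l : List W} (h : s.Sublist l) :
    ∃ t : List W, (s ++ t).prod = l.prod ∧ s.length + t.length = l.length ∧
      (s.map f).sum + (t.map f).sum = (l.map f).sum := by
  induction h with
  | slnil => exact ⟨[], by simp, by simp, by simp⟩
  | @cons s l' a h ih =>
    obtain ⟨t, hp, hl, hsum⟩ := ih
    simp only [List.prod_append] at hp
    refine ⟨(s.prod⁻¹ * a * s.prod) :: t, ?_, ?_, ?_⟩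
    · simp only [List.prod_append, List.prod_cons]
      rw [← hp]; group
    · simp only [List.length_cons]; omega
    · have hfa : f (s.prod⁻¹ * a * s.prod) = f a := by
        have := hf s.prod⁻¹ a; simpa using this
      simp only [List.map_cons, List.sum_cons, hfa]
      omega
  | @cons_cons s l' a h ih =>
    obtain ⟨t, hp, hl, hsum⟩ := ih
    simp only [List.prod_append] at hp
    refine ⟨t, ?_, ?_, ?_⟩
    · simp only [List.prod_append, List.prod_cons]
      rw [mul_assoc, hp]
    · simp only [List.length_cons]; omega
    · simp only [List.map_cons, List.sum_cons]; omega

private lemma pull_back (f : W → ℕ) (hf : ∀ a w : W, f (a * w * a⁻¹) = f w)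
    {s l : List W} (h : s.Sublist l) :
    ∃ t : List W, (t ++ s).prod = l.prod ∧ t.length + s.length = l.length ∧
      (t.map f).sum + (s.map f).sum = (l.map f).sum := by
  induction h with
  | slnil => exact ⟨[], by simp, by simp, by simp⟩
  | @cons s l' a h ih =>
    obtain ⟨t, hp, hl, hsum⟩ := ih
    simp only [List.prod_append] at hp
    refine ⟨a :: t, ?_, ?_, ?_⟩
    · simp only [List.prod_append, List.prod_cons]
      rw [← hp]; group
    · simp only [List.length_cons]; omega
    · simp only [List.map_cons, List.sum_cons]; omega
  | @cons_cons s l' a h ih =>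
    obtain ⟨t, hp, hl, hsum⟩ := ih
    simp only [List.prod_append] at hp
    refine ⟨t.map (fun x => a * x * a⁻¹), ?_, ?_, ?_⟩
    · simp only [List.prod_append, List.prod_cons, conj_prod]
      rw [← hp]; group
    · simp only [List.length_map, List.length_cons]; omega
    · have hmap : (t.map (fun x => a * x * a⁻¹)).map f = t.map f := by
        rw [List.map_map]; exact List.map_congr_left fun x _ => hf a x
      simp only [List.map_cons, List.sum_cons, hmap]; omega

end Aux

/-- If σ₁σ₂⋯σ_k = σ is a reduced factorization in a Coxeter group (reflection lengths add)
and a subsequence of the factors is selected, then there is a reduced factorization of σ into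
k factors whose first factors (in order) are the selected ones, and another whose last factors
are the selected ones. -/
theorem stmt15 {B W : Type*} [Group W] {M : CoxeterMatrix B} (cs : CoxeterSystem M W)
    (l : List W) (hred : (l.map (coxReflLen cs)).sum = coxReflLen cs l.prod)
    (s : List W) (hs : s.Sublist l) :
    (∃ l₁ : List W, l₁.prod = l.prod ∧ l₁.length = l.length ∧
      (l₁.map (coxReflLen cs)).sum = coxReflLen cs l.prod ∧ l₁.take s.length = s) ∧
    (∃ l₂ : List W, l₂.prod = l.prod ∧ l₂.length = l.length ∧
      (l₂.map (coxReflLen cs)).sum = coxReflLen cs l.prod ∧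
      l₂.drop (l.length - s.length) = s) := by
  have hf : ∀ a w : W, coxReflLen cs (a * w * a⁻¹) = coxReflLen cs w := coxReflLen_conj cs
  constructor
  · obtain ⟨t, hp, hl, hsum⟩ := pull_front (coxReflLen cs) hf hs
    refine ⟨s ++ t, hp, by simpa using hl, ?_, ?_⟩
    · rw [List.map_append, List.sum_append, hsum, hred]
    · simp [List.take_left]
  · obtain ⟨t, hp, hl, hsum⟩ := pull_back (coxReflLen cs) hf hs
    refine ⟨t ++ s, hp, by simpa using hl, ?_, ?_⟩
    · rw [List.map_append, List.sum_append, hsum, hred]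
    · have ht : t.length = l.length - s.length := by omega
      rw [← ht]
      simp [List.drop_left]
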